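/- arXiv:1602.08896 — 6 statements merged into one kernel-verified Lean document; each statement's English description precedes it below -/
import Mathlib

section
/- Let λ, μ ∈ ℂ with λ ≠ μ and let ω > 0. The function ψ(x) = exp(−(ω/2)·((λ+μ)/(λ−μ))·x²) belongs to L²(ℝ) if and only if |μ| < |λ|. -/
open MeasureTheory Complex Real

/-- For `λ ≠ μ` and `ω > 0`, the Gaussian
`ψ(x) = exp(−(ω/2)·((λ+μ)/(λ−μ))·x²)` is in `L²(ℝ)` iff `|μ| < |λ|`. -/
theorem squeezed_gaussian_memL2_iff (lam mu : ℂ) (hlm : lam ≠ mu) (ω : ℝ) (hω : 0 < ω) :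
    MeasureTheory.MemLp
      (fun x : ℝ => Complex.exp (-((ω : ℂ) / 2) * ((lam + mu) / (lam - mu)) * (x : ℂ) ^ 2))
      2 MeasureTheory.volume
    ↔ ‖mu‖ < ‖lam‖ := by
  set c : ℂ := (lam + mu) / (lam - mu) with hc
  set b : ℂ := ((ω : ℂ) / 2) * c with hb
  have hfun : (fun x : ℝ => Complex.exp (-((ω : ℂ) / 2) * c * (x : ℂ) ^ 2))
      = fun x : ℝ => Complex.exp (-b * (x : ℂ) ^ 2) := by
    funext x; rw [hb]; ring_nf
  have hsub : lam - mu ≠ 0 := sub_ne_zero.mpr hlm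
  have hden : 0 < Complex.normSq (lam - mu) := Complex.normSq_pos.mpr hsub
  have hcre : c.re = (Complex.normSq lam - Complex.normSq mu) / Complex.normSq (lam - mu) := by
    rw [hc, Complex.div_re, Complex.normSq_apply, Complex.normSq_apply, Complex.normSq_apply]
    simp only [Complex.add_re, Complex.add_im, Complex.sub_re, Complex.sub_im]
    ring
  have hbre : b.re = (ω / 2) * c.re := by
    rw [hb]
    simp [Complex.mul_re, Complex.div_re]
  have hmeas : AEStronglyMeasurable
      (fun x : ℝ => Complex.exp (-b * (x : ℂ) ^ 2)) volume :=
    (Complex.continuous_exp.comp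
      (continuous_const.mul (Complex.continuous_ofReal.pow 2))).aestronglyMeasurable
  rw [hfun, memLp_two_iff_integrable_sq_norm hmeas]
  have hnorm : (fun x : ℝ => ‖Complex.exp (-b * (x : ℂ) ^ 2)‖ ^ 2)
      = fun x : ℝ => Real.exp (-(2 * b.re) * x ^ 2) := by
    funext x
    rw [norm_cexp_neg_mul_sq, ← Real.exp_nat_mul]
    ring_nf
  rw [hnorm, integrable_exp_neg_mul_sq_iff]
  constructor
  · intro h
    have hcpos : 0 < c.re := by nlinarith
    have : 0 < Complex.normSq lam - Complex.normSq mu := by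
      rw [hcre] at hcpos
      have h2 := mul_pos hcpos hden
      rwa [div_mul_cancel₀ _ (ne_of_gt hden)] at h2
    have habs : ‖mu‖ ^ 2 < ‖lam‖ ^ 2 := by
      rw [Complex.sq_norm, Complex.sq_norm]; linarith
    exact lt_of_pow_lt_pow_left₀ 2 (norm_nonneg _) habs
  · intro h
    have : Complex.normSq mu < Complex.normSq lam := by
      rw [← Complex.sq_norm, ← Complex.sq_norm]
      exact pow_lt_pow_left₀ h (norm_nonneg _) (by norm_num)
    have hcpos : 0 < c.re := by rw [hcre]; exact div_pos (by linarith) hden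
    nlinarith
end

section
/- Let N ≥ 1 and let P be a 2N×2N complex matrix. Let S be the 2N×2N block-diagonal matrix with blocks (1, −1), and let K be the block matrix [[0,1],[1,0]]. Assume: (i) P*S = SP; (ii) SP is positive semidefinite, i.e. ⟨ζ, SPζ⟩ ≥ 0 for all ζ ∈ ℂ^{2N}; (iii) P + K·P̄·K = 1, where P̄ is the entrywise complex conjugate of P. Then the matrix S(P − ½·1) is positive definite: ⟨ζ, S(P − ½)ζ⟩ > 0 for all nonzero ζ ∈ ℂ^{2N}. -/
open Matrix
open scoped ComplexOrder

/-- Entrywise complex conjugate of a matrix. -/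
def matConj {m n : Type*} (M : Matrix m n ℂ) : Matrix m n ℂ := M.map (starRingEnd ℂ)

/-- If `P* S = SP`, `SP ≥ 0` and `P + K P̄ K = 1`, then
`S(P − ½·1)` is positive definite. -/
theorem quasifree_SP_posdef (N : ℕ) (hN : 1 ≤ N)
    (P : Matrix (Fin N ⊕ Fin N) (Fin N ⊕ Fin N) ℂ)
    (S : Matrix (Fin N ⊕ Fin N) (Fin N ⊕ Fin N) ℂ)
    (hS : S = Matrix.fromBlocks 1 0 0 (-1))
    (K : Matrix (Fin N ⊕ Fin N) (Fin N ⊕ Fin N) ℂ)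
    (hK : K = Matrix.fromBlocks 0 1 1 0)
    (h1 : Pᴴ * S = S * P)
    (h2 : (S * P).PosSemidef)
    (h3 : P + K * matConj P * K = 1) :
    (S * (P - (1 / 2 : ℂ) • 1)).PosDef := by
  set Q := S * P with hQdef
  have hKK : K * K = 1 := by
    simp [hK, Matrix.fromBlocks_multiply, ← Matrix.fromBlocks_one]
  have hSS : S * S = 1 := by
    simp [hS, Matrix.fromBlocks_multiply, ← Matrix.fromBlocks_one]
  have hKH : Kᴴ = K := by
    simp [hK, Matrix.fromBlocks_conjTranspose]
  have hKS : K * S = -(S * K) := by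
    simp [hS, hK, Matrix.fromBlocks_multiply, Matrix.fromBlocks_neg]
  -- conj of S*P equals S * conj P
  have hmapS : matConj S = S := by
    ext i j
    rcases i with i | i <;> rcases j with j | j <;>
      simp [matConj, hS, Matrix.fromBlocks, Matrix.one_apply] <;>
      split <;> simp
  have hmQ : matConj Q = S * matConj P := by
    rw [hQdef, matConj, Matrix.map_mul, ← matConj, ← matConj, hmapS]
  -- conj Q = Qᵀ
  have hconjQ : matConj Q = Qᵀ := by
    have hHerm : Qᴴ = Q := h2.1
    ext i j
    have := congrFun (congrFun hHerm j) i
    simp only [Matrix.conjTranspose_apply] at this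
    simp [matConj, Matrix.transpose_apply, ← this]
  -- key identity : K * Qᵀ * K = Q - S
  have hKPK : K * matConj P * K = 1 - P := by
    linear_combination (norm := module) h3
  have key : K * Qᵀ * K = Q - S := by
    rw [← hconjQ, hmQ]
    calc K * (S * matConj P) * K = (K * S) * (matConj P * K) := by
          simp only [Matrix.mul_assoc]
      _ = -(S * (K * matConj P * K)) := by
          rw [hKS]; rw [Matrix.mul_assoc]
          rw [Matrix.neg_mul, Matrix.mul_assoc]
      _ = -(S * (1 - P)) := by rw [hKPK]
      _ = Q - S := by rw [Matrix.mul_sub, Matrix.mul_one, hQdef]; abel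
  -- the target matrix as half of a PSD sum
  have hA : S * (P - (1 / 2 : ℂ) • 1) = (1 / 2 : ℂ) • (Q + K * Qᵀ * K) := by
    rw [key, Matrix.mul_sub, Matrix.mul_smul, Matrix.mul_one, hQdef]
    module
  have hQT : (K * Qᵀ * K).PosSemidef := by
    have := (h2.transpose).conjTranspose_mul_mul_same K
    rwa [hKH] at this
  have hSum : (Q + K * Qᵀ * K).PosSemidef := h2.add hQT
  have hhalf : (0 : ℂ) < (1 / 2 : ℂ) := by
    rw [show (1 / 2 : ℂ) = ((1 / 2 : ℝ) : ℂ) by norm_num]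
    exact_mod_cast (by norm_num : (0:ℝ) < 1/2)
  rw [Matrix.posDef_iff_dotProduct_mulVec]
  constructor
  · -- Hermitian
    rw [hA]
    unfold Matrix.IsHermitian
    rw [Matrix.conjTranspose_smul, hSum.1]
    congr 1
    simp
  · intro x hx
    rw [hA]
    have hval : star x ⬝ᵥ ((1 / 2 : ℂ) • (Q + K * Qᵀ * K)) *ᵥ x
        = (1 / 2 : ℂ) * (star x ⬝ᵥ (Q + K * Qᵀ * K) *ᵥ x) := by
      rw [Matrix.smul_mulVec, dotProduct_smul, smul_eq_mul]
    rw [hval]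
    apply mul_pos hhalf
    have hnn : 0 ≤ star x ⬝ᵥ (Q + K * Qᵀ * K) *ᵥ x := hSum.dotProduct_mulVec_nonneg x
    rcases hnn.lt_or_eq with h | h
    · exact h
    · -- value zero leads to x = 0
      exfalso
      have hs : star x ⬝ᵥ (Q + K * Qᵀ * K) *ᵥ x = 0 := h.symm
      rw [Matrix.add_mulVec, dotProduct_add] at hs
      have ha : star x ⬝ᵥ Q *ᵥ x = 0 ∧ star x ⬝ᵥ (K * Qᵀ * K) *ᵥ x = 0 :=
        (add_eq_zero_iff_of_nonneg (h2.dotProduct_mulVec_nonneg x) (hQT.dotProduct_mulVec_nonneg x)).mp hs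
      have hQx : Q *ᵥ x = 0 := (h2.dotProduct_mulVec_zero_iff x).mp ha.1
      have hKx : (K * Qᵀ * K) *ᵥ x = 0 := (hQT.dotProduct_mulVec_zero_iff x).mp ha.2
      have hSx : S *ᵥ x = 0 := by
        have : S = Q - K * Qᵀ * K := by rw [key]; abel
        rw [this, Matrix.sub_mulVec, hQx, hKx, sub_zero]
      have : x = 0 := by
        have := congrArg (fun v => S *ᵥ v) hSx
        simpa [Matrix.mulVec_mulVec, hSS] using this
      exact hx this
end

section
/- Let ω > 0 and z ∈ ℂ with |z| < 1. Let ψ₀(x) = c₀·exp(−ωx²/2) and ψ_z(x) = c_z·exp(−(ω/2)·((1+z)/(1−z))·x²) be the L²(ℝ)-normalized Gaussians (c₀, c_z > 0 chosen so that ‖ψ₀‖ = ‖ψ_z‖ = 1). Then |⟨ψ₀, ψ_z⟩|² = √(1 − |z|²). In particular, for |z| = tanh r with tanh r = 1/√2 the fidelity is 1/√2. -/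
open MeasureTheory Real

set_option maxHeartbeats 1000000

private lemma exp_sq' (r : ℝ) : Real.exp r ^ 2 = Real.exp (2 * r) := by
  rw [sq, ← Real.exp_add]; ring_nf

/-- The fidelity between the normalized ground state Gaussian and the
normalized squeezed Gaussian of parameter `z`, `|z| < 1`, is `√(1 − |z|²)`;
in particular for `|z| = 1/√2` it equals `1/√2`. -/
theorem squeezed_state_fidelity (ω : ℝ) (hω : 0 < ω) (z : ℂ) (hz : ‖z‖ < 1)
    (c₀ cz : ℝ) (hc₀ : 0 < c₀) (hcz : 0 < cz)
    (ψ₀ ψz : ℝ → ℂ)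
    (hψ₀ : ∀ x : ℝ, ψ₀ x = (c₀ : ℂ) * Complex.exp (-((ω : ℂ) / 2) * (x : ℂ) ^ 2))
    (hψz : ∀ x : ℝ, ψz x =
      (cz : ℂ) * Complex.exp (-((ω : ℂ) / 2) * ((1 + z) / (1 - z)) * (x : ℂ) ^ 2))
    (hn₀ : ∫ x : ℝ, ‖ψ₀ x‖ ^ 2 = 1)
    (hnz : ∫ x : ℝ, ‖ψz x‖ ^ 2 = 1) :
    ‖∫ x : ℝ, (starRingEnd ℂ) (ψ₀ x) * ψz x‖ ^ 2 =
      Real.sqrt (1 - ‖z‖ ^ 2) ∧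
    (‖z‖ = 1 / Real.sqrt 2 →
      ‖∫ x : ℝ, (starRingEnd ℂ) (ψ₀ x) * ψz x‖ ^ 2 = 1 / Real.sqrt 2) := by
  set w : ℂ := (1 + z) / (1 - z) with hw
  have hπ : (0:ℝ) < Real.pi := Real.pi_pos
  have hz1 : (1 : ℂ) - z ≠ 0 := by
    intro h
    have hz1' : z = 1 := by linear_combination -h
    rw [hz1'] at hz; simp at hz
  have hA : 0 < ‖1 - z‖ := norm_pos_iff.mpr hz1
  set A : ℝ := ‖1 - z‖ with hAdef
  set s : ℝ := ‖z‖ ^ 2 with hsdef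
  have hs1 : s < 1 := by
    have := norm_nonneg z
    nlinarith
  -- Re w
  have hRw : w.re = (1 - s) / A ^ 2 := by
    rw [hw, Complex.div_re, hAdef, hsdef, Complex.sq_norm, Complex.sq_norm,
      Complex.normSq_apply, Complex.normSq_apply]
    simp [Complex.normSq_apply]
    ring
  have hRwpos : 0 < w.re := by
    rw [hRw]
    exact div_pos (by linarith) (by positivity)
  -- normalization of ψ₀
  have key₀ : ∀ x : ℝ, ‖ψ₀ x‖ ^ 2 = c₀ ^ 2 * Real.exp (-ω * x ^ 2) := by
    intro x
    rw [hψ₀ x]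
    have he : -((ω : ℂ) / 2) * (x : ℂ) ^ 2 = ((-(ω / 2) * x ^ 2 : ℝ) : ℂ) := by
      push_cast; ring
    rw [he]
    rw [norm_mul, Complex.norm_real, Real.norm_eq_abs,
      abs_of_pos hc₀, ← Complex.ofReal_exp, Complex.norm_real, Real.norm_eq_abs,
      abs_of_pos (Real.exp_pos _), mul_pow, exp_sq']
    ring_nf
  have hn₀' : c₀ ^ 2 * Real.sqrt (Real.pi / ω) = 1 := by
    rw [← hn₀]
    simp_rw [key₀]
    rw [integral_const_mul, integral_gaussian]
  -- normalization of ψz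
  have keyz : ∀ x : ℝ, ‖ψz x‖ ^ 2 = cz ^ 2 * Real.exp (-(ω * w.re) * x ^ 2) := by
    intro x
    rw [hψz x]
    have he : -((ω : ℂ) / 2) * w * (x : ℂ) ^ 2 = ((-(ω / 2) * x ^ 2 : ℝ) : ℂ) * w := by
      push_cast; ring
    rw [norm_mul, Complex.norm_real, Real.norm_eq_abs,
      abs_of_pos hcz, he, Complex.norm_exp, Complex.re_ofReal_mul, mul_pow, exp_sq']
    ring_nf
  have hnz' : cz ^ 2 * Real.sqrt (Real.pi / (ω * w.re)) = 1 := by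
    rw [← hnz]
    simp_rw [keyz]
    rw [integral_const_mul, integral_gaussian]
  -- the overlap integral
  set b : ℂ := ((ω / 2 : ℝ) : ℂ) * (1 + w) with hb
  have hbre : 0 < b.re := by
    rw [hb, Complex.re_ofReal_mul]
    have : (1 + w).re = 1 + w.re := by simp
    rw [this]; positivity
  have hover : ∀ x : ℝ, (starRingEnd ℂ) (ψ₀ x) * ψz x
      = ((c₀ * cz : ℝ) : ℂ) * Complex.exp (-b * (x : ℂ) ^ 2) := by
    intro x
    rw [hψ₀ x, hψz x]
    have he : -((ω : ℂ) / 2) * (x : ℂ) ^ 2 = ((-(ω / 2) * x ^ 2 : ℝ) : ℂ) := by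
      push_cast; ring
    rw [he, map_mul, Complex.conj_ofReal, ← Complex.exp_conj, Complex.conj_ofReal]
    rw [mul_mul_mul_comm, ← Complex.exp_add]
    congr 1
    · push_cast; ring
    · rw [hb]; push_cast; ring
  have hint : (∫ x : ℝ, (starRingEnd ℂ) (ψ₀ x) * ψz x)
      = ((c₀ * cz : ℝ) : ℂ) * (((Real.pi : ℂ) / b) ^ (1 / 2 : ℂ)) := by
    simp_rw [hover]
    rw [integral_const_mul, integral_gaussian_complex hbre]
  -- |1 + w| and |b|
  have h1w : 1 + w = 2 / (1 - z) := by
    rw [hw]; field_simp; ring_nf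
  have habsb : ‖b‖ = ω / A := by
    rw [hb, norm_mul, Complex.norm_real, Real.norm_eq_abs, abs_of_pos (by linarith : (0:ℝ) < ω / 2),
      h1w, norm_div, hAdef]
    simp
    ring
  have hbne : b ≠ 0 := by
    intro h; rw [h] at hbre; simp at hbre
  have hpibne : (Real.pi : ℂ) / b ≠ 0 := by
    apply div_ne_zero _ hbne
    exact_mod_cast hπ.ne'
  -- absolute value of overlap squared
  have habs2 : ‖∫ x : ℝ, (starRingEnd ℂ) (ψ₀ x) * ψz x‖ ^ 2
      = c₀ ^ 2 * cz ^ 2 * (Real.pi * A / ω) := by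
    rw [hint, norm_mul, Complex.norm_real, Real.norm_eq_abs, abs_of_pos (mul_pos hc₀ hcz),
      Complex.norm_cpow_of_ne_zero hpibne]
    have : ((1 : ℂ) / 2).im = 0 := by simp
    rw [this]
    have : ((1 : ℂ) / 2).re = 1 / 2 := by simp
    rw [this]
    rw [norm_div, Complex.norm_real, Real.norm_eq_abs, abs_of_pos hπ, habsb]
    rw [mul_pow]
    rw [div_pow, ← Real.rpow_natCast (_ ^ (_ : ℝ)) 2, ← Real.rpow_mul (by positivity)]
    norm_num
    rw [div_div_eq_mul_div]
    ring
  -- fourth powers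
  have hc₀4 : c₀ ^ 2 * c₀ ^ 2 = ω / Real.pi := by
    have h1 : (c₀ ^ 2 * Real.sqrt (Real.pi / ω)) * (c₀ ^ 2 * Real.sqrt (Real.pi / ω)) = 1 := by
      rw [hn₀']; norm_num
    have h2 : Real.sqrt (Real.pi / ω) * Real.sqrt (Real.pi / ω) = Real.pi / ω := by
      exact Real.mul_self_sqrt (by positivity)
    have h3 : c₀ ^ 2 * c₀ ^ 2 * (Real.pi / ω) = 1 := by nlinarith
    field_simp at h3 ⊢
    linarith
  have hcz4 : cz ^ 2 * cz ^ 2 = ω * w.re / Real.pi := by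
    have h2 : Real.sqrt (Real.pi / (ω * w.re)) * Real.sqrt (Real.pi / (ω * w.re))
        = Real.pi / (ω * w.re) := Real.mul_self_sqrt (by positivity)
    have h3 : cz ^ 2 * cz ^ 2 * (Real.pi / (ω * w.re)) = 1 := by nlinarith
    have hωw : 0 < ω * w.re := by positivity
    field_simp at h3 ⊢
    linarith
  -- main computation
  set T : ℝ := c₀ ^ 2 * cz ^ 2 * (Real.pi * A / ω) with hT
  have hTpos : 0 < T := by positivity
  have hTsq : T ^ 2 = 1 - s := by
    have : T ^ 2 = (c₀ ^ 2 * c₀ ^ 2) * (cz ^ 2 * cz ^ 2) * (Real.pi * A / ω) ^ 2 := by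
      rw [hT]; ring
    rw [this, hc₀4, hcz4, hRw]
    have hπ' : Real.pi ≠ 0 := hπ.ne'
    have hω' : ω ≠ 0 := hω.ne'
    have hA' : A ≠ 0 := hA.ne'
    field_simp
  have hmain : ‖∫ x : ℝ, (starRingEnd ℂ) (ψ₀ x) * ψz x‖ ^ 2
      = Real.sqrt (1 - s) := by
    rw [habs2, ← hTsq, Real.sqrt_sq hTpos.le]
  refine ⟨hmain, fun habsz => ?_⟩
  rw [hmain]
  have : s = 1 / 2 := by
    rw [hsdef, habsz, div_pow, one_pow, Real.sq_sqrt (by norm_num : (2:ℝ) ≥ 0)]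
  rw [this]
  rw [show (1 : ℝ) - 1/2 = 1/2 by norm_num, one_div, one_div, Real.sqrt_inv]
end

section
/- Let N ≥ 1 and let Z be an N×N complex matrix with Z = Zᵗ and 1 − ZZ* positive definite. Then there exist N×N complex matrices U, V satisfying U*U − V*V = 1 and U*V̄ = V*Ū, such that Z = −(U*)⁻¹V*. Moreover, U and V are unique up to multiplication by a unitary from the right: if (U', V') is another such pair then there is a unitary N×N matrix W with U' = UW and V' = VW. -/
open Matrix
open scoped ComplexOrder

lemma matConj_mul {n : Type*} [Fintype n] (A B : Matrix n n ℂ) :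
    matConj (A * B) = matConj A * matConj B := by
  unfold matConj
  ext i j
  simp [Matrix.mul_apply, map_sum]

lemma matConj_neg {n : Type*} (A : Matrix n n ℂ) : matConj (-A) = -matConj A := by
  unfold matConj; ext i j; simp

lemma matConj_conjTranspose {n : Type*} (A : Matrix n n ℂ) : matConj (Aᴴ) = Aᵀ := by
  unfold matConj; ext i j; simp

/-- Every symmetric `Z` with `1 − ZZ*` positive definite arises as
`Z = −(U*)⁻¹V*` for a Bogoliubov pair `(U, V)`, unique up to a unitary on the right. -/
theorem Z_matrix_bogoliubov_existence_uniqueness (N : ℕ) (hN : 1 ≤ N)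
    (Z : Matrix (Fin N) (Fin N) ℂ)
    (hsymm : Z = Zᵀ)
    (hpos : (1 - Z * Zᴴ).PosDef) :
    ∃ U V : Matrix (Fin N) (Fin N) ℂ,
      (Uᴴ * U - Vᴴ * V = 1 ∧ Uᴴ * matConj V = Vᴴ * matConj U ∧ Z = -(Uᴴ)⁻¹ * Vᴴ) ∧
      (∀ U' V' : Matrix (Fin N) (Fin N) ℂ,
        (U'ᴴ * U' - V'ᴴ * V' = 1 ∧ U'ᴴ * matConj V' = V'ᴴ * matConj U' ∧
          Z = -(U'ᴴ)⁻¹ * V'ᴴ) →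
        ∃ W : Matrix (Fin N) (Fin N) ℂ,
          W ∈ Matrix.unitaryGroup (Fin N) ℂ ∧ U' = U * W ∧ V' = V * W) := by
  set A : Matrix (Fin N) (Fin N) ℂ := 1 - Z * Zᴴ with hA
  have hAs : A.PosSemidef := hpos.posSemidef
  set S : Matrix (Fin N) (Fin N) ℂ := (open scoped MatrixOrder in CFC.sqrt A) with hSdef
  have hSherm : Sᴴ = S := (open scoped MatrixOrder in (CFC.sqrt_nonneg A).posSemidef.1)
  have hSS : S * S = A := (open scoped MatrixOrder in CFC.sqrt_mul_sqrt_self A hAs.nonneg)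
  have hdetA : A.det ≠ 0 := ne_of_gt hpos.det_pos
  have hdetS : IsUnit S.det := by
    have : S.det * S.det = A.det := by rw [← Matrix.det_mul, hSS]
    exact isUnit_iff_ne_zero.mpr (fun h => hdetA (by rw [← this, h, zero_mul]))
  set U : Matrix (Fin N) (Fin N) ℂ := S⁻¹ with hUdef
  set V : Matrix (Fin N) (Fin N) ℂ := -(Zᴴ * U) with hVdef
  have hUherm : Uᴴ = U := by
    rw [hUdef, Matrix.conjTranspose_nonsing_inv, hSherm]
  have hUS : U * S = 1 := Matrix.nonsing_inv_mul S hdetS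
  have hSU : S * U = 1 := Matrix.mul_nonsing_inv S hdetS
  have hVH : Vᴴ = -(Uᴴ * Z) := by
    rw [hVdef]
    simp [Matrix.conjTranspose_mul, Matrix.mul_assoc]
  have hUAU : U * A * U = 1 := by
    rw [← hSS]
    calc U * (S * S) * U = (U * S) * (S * U) := by noncomm_ring
    _ = 1 := by rw [hUS, hSU, one_mul]
  have h1 : Uᴴ * U - Vᴴ * V = 1 := by
    rw [hVH, hVdef, hUherm]
    have : U * Z * (Zᴴ * U) = U * (Z * Zᴴ) * U := by noncomm_ring
    calc U * U - -(U * Z) * -(Zᴴ * U) = U * U - U * (Z * Zᴴ) * U := by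
          rw [neg_mul_neg, Matrix.mul_assoc U Z (Zᴴ * U), ← Matrix.mul_assoc Z Zᴴ U,
            ← Matrix.mul_assoc U (Z * Zᴴ) U]
    _ = U * (1 - Z * Zᴴ) * U := by noncomm_ring
    _ = 1 := by rw [← hA, hUAU]
  have hconjV : matConj V = -(Z * matConj U) := by
    rw [hVdef, matConj_neg, matConj_mul, matConj_conjTranspose, ← hsymm]
  have h2 : Uᴴ * matConj V = Vᴴ * matConj U := by
    rw [hconjV, hVH, hUherm]
    simp [Matrix.mul_assoc]
  have hUHinv : (Uᴴ)⁻¹ = S := by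
    rw [hUherm, hUdef, Matrix.nonsing_inv_nonsing_inv S hdetS]
  have h3 : Z = -(Uᴴ)⁻¹ * Vᴴ := by
    rw [hUHinv, hVH, hUherm]
    calc Z = (S * U) * Z := by rw [hSU, one_mul]
    _ = -S * -(U * Z) := by noncomm_ring
  refine ⟨U, V, ⟨h1, h2, h3⟩, ?_⟩
  rintro U' V' ⟨h1', _h2', h3'⟩
  -- U' is invertible
  have hposU' : (U'ᴴ * U').PosDef := by
    have hvv : (V'ᴴ * V').PosSemidef := Matrix.posSemidef_conjTranspose_mul_self V'
    have hone : (1 : Matrix (Fin N) (Fin N) ℂ).PosDef :=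
      Matrix.PosDef.one
    have : U'ᴴ * U' = 1 + V'ᴴ * V' := by rw [← h1', sub_add_cancel]
    rw [this]
    exact hone.add_posSemidef hvv
  have hdetU' : IsUnit U'.det := by
    have h := hposU'.det_pos
    rw [Matrix.det_mul] at h
    refine isUnit_iff_ne_zero.mpr fun hz => ?_
    rw [hz, mul_zero] at h
    exact lt_irrefl _ h
  have hdetU'H : IsUnit (U'ᴴ).det := by
    rw [Matrix.det_conjTranspose]
    exact hdetU'.star
  have hV'H : V'ᴴ = -(U'ᴴ * Z) := by
    rw [h3']
    calc V'ᴴ = (U'ᴴ * (U'ᴴ)⁻¹) * V'ᴴ := by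
          rw [Matrix.mul_nonsing_inv _ hdetU'H, one_mul]
    _ = -(U'ᴴ * (-(U'ᴴ)⁻¹ * V'ᴴ)) := by noncomm_ring
  have hV' : V' = -(Zᴴ * U') := by
    have := congrArg Matrix.conjTranspose hV'H
    simpa [Matrix.conjTranspose_mul] using this
  have hU'AU' : U'ᴴ * A * U' = 1 := by
    rw [← h1', hV'H, hV']
    rw [hA]
    calc U'ᴴ * (1 - Z * Zᴴ) * U'
        = U'ᴴ * U' - -(U'ᴴ * Z) * -(Zᴴ * U') := by noncomm_ring
    _ = _ := rfl
  refine ⟨S * U', ?_, ?_, ?_⟩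
  · rw [Matrix.mem_unitaryGroup_iff', Matrix.star_eq_conjTranspose,
      Matrix.conjTranspose_mul, hSherm]
    calc U'ᴴ * S * (S * U') = U'ᴴ * (S * S) * U' := by noncomm_ring
    _ = 1 := by rw [hSS, hU'AU']
  · rw [← Matrix.mul_assoc, hUS, one_mul]
  · rw [hV', hVdef]
    calc -(Zᴴ * U') = -(Zᴴ * ((U * S) * U')) := by rw [hUS, one_mul]
    _ = -(Zᴴ * U) * (S * U') := by noncomm_ring
end

section
/- Let N ≥ 1, let Z be an N×N complex matrix with 1 − ZZ* positive definite, and let A, B be N×N complex matrices. For real s, u in a sufficiently small neighborhood of 0, define F(s,u) = −log det(1 − (Z+sA)(Z+uB)*), using the principal branch of the complex logarithm (well defined near (0,0) since det(1 − ZZ*) > 0). Then the mixed second derivative exists and ∂²F/∂s∂u(0,0) = tr((1 − ZZ*)⁻¹·A·(1 − Z*Z)⁻¹·B*). -/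
open Matrix
open scoped ComplexOrder

open Polynomial in
/-- Expansion of `det (M - u • W)` for invertible `M`:
`det (M - u•W) = det M * (1 + tr(M⁻¹W)(-u) + q(-u)(-u)²)`. -/
lemma det_sub_smul_expand {N : ℕ} (M W : Matrix (Fin N) (Fin N) ℂ) (hM : IsUnit M.det) :
    ∃ q : Polynomial ℂ, ∀ u : ℂ,
      (M - u • W).det
        = M.det * (1 + Matrix.trace (M⁻¹ * W) * (-u) + q.eval (-u) * (-u) ^ 2) := by
  refine ⟨(Matrix.det (1 + (X : Polynomial ℂ) • (M⁻¹ * W).map Polynomial.C)).divX.divX,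
    fun u => ?_⟩
  have hfac : M - u • W = M * (1 + (-u) • (M⁻¹ * W)) := by
    rw [Matrix.mul_add, Matrix.mul_one, Matrix.mul_smul, ← Matrix.mul_assoc,
      Matrix.mul_nonsing_inv _ hM, Matrix.one_mul, neg_smul, ← sub_eq_add_neg]
  rw [hfac, Matrix.det_mul, Matrix.det_one_add_smul (-u)]

/-- Derivative at `0` of `u ↦ det (M - u • W)` (real variable). -/
lemma det_sub_smul_hasDerivAt {N : ℕ} (M W : Matrix (Fin N) (Fin N) ℂ)
    (hM : IsUnit M.det) :
    HasDerivAt (fun u : ℝ => (M - (u : ℂ) • W).det)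
      (-(M.det * Matrix.trace (M⁻¹ * W))) 0 := by
  obtain ⟨q, hq⟩ := det_sub_smul_expand M W hM
  set t := Matrix.trace (M⁻¹ * W) with ht
  have h1 : HasDerivAt (fun u : ℂ => -u) (-1) 0 := (hasDerivAt_id (0 : ℂ)).neg
  have h2 : HasDerivAt (fun u : ℂ => t * -u) (-t) 0 := by
    simpa using h1.const_mul t
  have h3 : HasDerivAt (fun u : ℂ => q.eval (-u)) (-(q.derivative.eval 0)) 0 := by
    have := (q.hasDerivAt (-(0 : ℂ))).comp (0 : ℂ) h1
    simpa [Function.comp_def] using this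
  have h4 : HasDerivAt (fun u : ℂ => (-u) ^ 2) 0 0 := by
    have := h1.pow 2
    simpa [Pi.pow_def] using this
  have h5 : HasDerivAt (fun u : ℂ => q.eval (-u) * (-u) ^ 2) 0 0 := by
    have := h3.mul h4
    simpa [Pi.mul_def] using this
  have hsum : HasDerivAt (fun u : ℂ => 1 + t * -u + q.eval (-u) * (-u) ^ 2) (-t) 0 := by
    have := ((hasDerivAt_const (0 : ℂ) (1 : ℂ)).add h2).add h5
    simpa [Pi.add_def] using this
  have hC : HasDerivAt (fun u : ℂ => M.det * (1 + t * -u + q.eval (-u) * (-u) ^ 2))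
      (-(M.det * t)) 0 := by
    have := hsum.const_mul M.det
    simpa [mul_comm] using this
  have hR := hC.comp_ofReal (z := 0)
  have hfun : (fun u : ℝ => (M - (u : ℂ) • W).det)
      = fun u : ℝ => M.det * (1 + t * -(u : ℂ) + q.eval (-(u : ℂ)) * (-(u : ℂ)) ^ 2) :=
    funext fun u => hq u
  rw [hfun]
  simpa using hR

attribute [local instance] Matrix.linftyOpNormedAddCommGroup Matrix.linftyOpNormedRing
  Matrix.linftyOpNormedAlgebra

/-- Mixed second derivative of the Kähler potential
`F(s,u) = −log det(1 − (Z+sA)(Z+uB)*)` at the origin equals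
`tr((1−ZZ*)⁻¹ A (1−Z*Z)⁻¹ B*)`. -/
theorem kahler_potential_mixed_derivative (N : ℕ) (hN : 1 ≤ N)
    (Z A B : Matrix (Fin N) (Fin N) ℂ)
    (hpos : (1 - Z * Zᴴ).PosDef)
    (F : ℝ → ℝ → ℂ)
    (hF : ∀ s u : ℝ,
      F s u = -Complex.log (Matrix.det (1 - (Z + (s : ℂ) • A) * (Z + (u : ℂ) • B)ᴴ))) :
    (∀ᶠ s in nhds (0 : ℝ), DifferentiableAt ℝ (fun u : ℝ => F s u) 0) ∧
    HasDerivAt (fun s : ℝ => deriv (fun u : ℝ => F s u) 0)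
      (Matrix.trace ((1 - Z * Zᴴ)⁻¹ * A * (1 - Zᴴ * Z)⁻¹ * Bᴴ)) 0 := by
  classical
  set C : Matrix (Fin N) (Fin N) ℂ := 1 - Z * Zᴴ with hCdef
  have hdetpos : 0 < C.det := hpos.det_pos
  have hCdetne : C.det ≠ 0 := hdetpos.ne'
  have hCunit : IsUnit C.det := hCdetne.isUnit
  have hCslit : C.det ∈ Complex.slitPlane := by
    rw [Complex.mem_slitPlane_iff]
    left
    have := (Complex.lt_def.mp hdetpos).1
    simpa using this
  -- real-smul versus complex-smul
  have cast_smul : ∀ (s : ℝ) (X : Matrix (Fin N) (Fin N) ℂ), (s : ℂ) • X = s • X := by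
    intro s X
    rw [show ((s : ℝ) : ℂ) = algebraMap ℝ ℂ s from rfl, algebraMap_smul]
  set f : ℝ → Matrix (Fin N) (Fin N) ℂ := fun s => C - (s : ℂ) • (A * Zᴴ) with hfdef
  set W : ℝ → Matrix (Fin N) (Fin N) ℂ := fun s => (Z + (s : ℂ) • A) * Bᴴ with hWdef
  have hFs : ∀ s u : ℝ, F s u = -Complex.log ((f s - (u : ℂ) • W s).det) := by
    intro s u
    rw [hF]
    congr 3
    have hct : (Z + (u : ℂ) • B)ᴴ = Zᴴ + (u : ℂ) • Bᴴ := by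
      simp [conjTranspose_smul, Complex.conj_ofReal]
    rw [hct, hfdef, hWdef, hCdef]
    simp only [Matrix.mul_add, Matrix.add_mul, Matrix.smul_mul, Matrix.mul_smul]
    abel
  have hf0 : f 0 = C := by simp [hfdef]
  -- continuity of s ↦ det (f s)
  have hcont : Continuous fun s : ℝ => (f s).det := by
    obtain ⟨q, hq⟩ := det_sub_smul_expand C (A * Zᴴ) hCunit
    have hfun : (fun s : ℝ => (f s).det)
        = fun s : ℝ => C.det * (1 + Matrix.trace (C⁻¹ * (A * Zᴴ)) * (-(s : ℂ))
            + q.eval (-(s : ℂ)) * (-(s : ℂ)) ^ 2) := funext fun s => hq s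
    rw [hfun]
    fun_prop
  have hS : {s : ℝ | (f s).det ∈ Complex.slitPlane} ∈ nhds (0 : ℝ) := by
    have h0 : (f 0).det ∈ Complex.slitPlane := by rw [hf0]; exact hCslit
    exact hcont.continuousAt.preimage_mem_nhds (Complex.isOpen_slitPlane.mem_nhds h0)
  -- per-s derivative in u
  have key : ∀ s : ℝ, (f s).det ∈ Complex.slitPlane →
      HasDerivAt (fun u : ℝ => F s u) (Matrix.trace ((f s)⁻¹ * W s)) 0 := by
    intro s hs
    have hne : (f s).det ≠ 0 := by
      intro h0
      rw [h0] at hs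
      simp [Complex.mem_slitPlane_iff] at hs
    have hunit : IsUnit (f s).det := hne.isUnit
    have hdet : HasDerivAt (fun u : ℝ => (f s - (u : ℂ) • W s).det)
        (-((f s).det * Matrix.trace ((f s)⁻¹ * W s))) 0 :=
      det_sub_smul_hasDerivAt _ _ hunit
    have hval : (f s - ((0 : ℝ) : ℂ) • W s).det = (f s).det := by simp
    have hlog : HasDerivAt Complex.log ((f s).det)⁻¹ ((f s - ((0 : ℝ) : ℂ) • W s).det) := by
      rw [hval]; exact Complex.hasDerivAt_log hs
    have hcomp := hlog.comp (0 : ℝ) hdet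
    have hfun : (fun u : ℝ => F s u)
        = fun u : ℝ => -(Complex.log ((f s - (u : ℂ) • W s).det)) :=
      funext fun u => hFs s u
    rw [hfun]
    have := hcomp.neg
    have hval2 : -(((f s).det)⁻¹ * -((f s).det * Matrix.trace ((f s)⁻¹ * W s)))
        = Matrix.trace ((f s)⁻¹ * W s) := by
      field_simp
    rw [hval2] at this
    exact this
  -- first conjunct
  refine ⟨Filter.eventually_of_mem hS fun s hs => (key s hs).differentiableAt, ?_⟩
  -- φ : the u-derivative as a function of s
  set φ : ℝ → ℂ := fun s => Matrix.trace (Ring.inverse (f s) * W s) with hφdef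
  have hφeq : (fun s : ℝ => deriv (fun u : ℝ => F s u) 0) =ᶠ[nhds 0] φ := by
    filter_upwards [hS] with s hs
    rw [(key s hs).deriv, hφdef, Matrix.nonsing_inv_eq_ringInverse]
  -- derivative of f
  have hf' : HasDerivAt f (-(A * Zᴴ)) 0 := by
    have h1 : HasDerivAt (fun s : ℝ => s • (A * Zᴴ)) (A * Zᴴ) 0 := by
      have := (hasDerivAt_id (0 : ℝ)).smul_const (A * Zᴴ)
      simp only [id, one_smul] at this
      exact this
    have h2 := h1.const_sub C
    have hfun : f = fun s : ℝ => C - s • (A * Zᴴ) := by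
      funext s; rw [hfdef]; simp [cast_smul]
    rw [hfun]
    exact h2
  -- invertibility of C as a matrix
  have hCu : IsUnit C := (Matrix.isUnit_iff_isUnit_det C).2 hCunit
  have hinv : HasDerivAt (fun s : ℝ => Ring.inverse (f s)) (C⁻¹ * (A * Zᴴ) * C⁻¹) 0 := by
    have hfd := hasFDerivAt_ringInverse (𝕜 := ℝ) hCu.unit
    rw [hCu.unit_spec] at hfd
    have hfd2 : HasFDerivAt Ring.inverse
        (-(ContinuousLinearMap.mulLeftRight ℝ (Matrix (Fin N) (Fin N) ℂ)
          ↑hCu.unit⁻¹) ↑hCu.unit⁻¹) (f 0) := by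
      rw [hf0]; exact hfd
    have := hfd2.comp_hasDerivAt 0 hf'
    have hcoe : ((hCu.unit⁻¹ : (Matrix (Fin N) (Fin N) ℂ)ˣ) : Matrix (Fin N) (Fin N) ℂ)
        = C⁻¹ := by
      rw [Matrix.nonsing_inv_eq_ringInverse]
      conv_rhs => rw [← hCu.unit_spec]
      exact (Ring.inverse_unit hCu.unit).symm
    simp [hcoe, ContinuousLinearMap.mulLeftRight_apply, Function.comp_def] at this
    exact this
  -- derivative of s ↦ (Z + s A) Bᴴ
  have hW' : HasDerivAt W (A * Bᴴ) 0 := by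
    have h1 : HasDerivAt (fun s : ℝ => Z + s • A) A 0 := by
      have := ((hasDerivAt_id (0 : ℝ)).smul_const A).const_add Z
      simp only [id, one_smul] at this
      exact this
    have hfun : W = fun s : ℝ => (Z + s • A) * Bᴴ := by
      funext s; rw [hWdef]; simp [cast_smul]
    rw [hfun]
    exact h1.mul_const Bᴴ
  -- product rule
  have hθ : HasDerivAt (fun s : ℝ => Ring.inverse (f s) * W s)
      (C⁻¹ * (A * Zᴴ) * C⁻¹ * (Z * Bᴴ) + C⁻¹ * (A * Bᴴ)) 0 := by
    have := hinv.mul hW'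
    simp [hf0, hWdef, Matrix.nonsing_inv_eq_ringInverse, Pi.mul_def] at this ⊢
    exact this
  -- apply the trace (a continuous linear map)
  have hφ' : HasDerivAt φ
      (Matrix.trace (C⁻¹ * (A * Zᴴ) * C⁻¹ * (Z * Bᴴ) + C⁻¹ * (A * Bᴴ))) 0 := by
    have hL := (LinearMap.toContinuousLinearMap
      ((Matrix.traceLinearMap (Fin N) ℂ ℂ).restrictScalars ℝ)).hasFDerivAt.comp_hasDerivAt 0 hθ
    exact hL
  -- the key matrix identity : (1 - Zᴴ Z)⁻¹ = 1 + Zᴴ C⁻¹ Z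
  have hCC : C * C⁻¹ = 1 := Matrix.mul_nonsing_inv _ hCunit
  have hQ : (1 - Zᴴ * Z)⁻¹ = 1 + Zᴴ * C⁻¹ * Z := by
    apply Matrix.inv_eq_right_inv
    have expand : (1 - Zᴴ * Z) * (1 + Zᴴ * C⁻¹ * Z)
        = 1 + (Zᴴ * C⁻¹ * Z - Zᴴ * Z * Zᴴ * C⁻¹ * Z) - Zᴴ * Z := by
      noncomm_ring
    have hmid : Zᴴ * C⁻¹ * Z - Zᴴ * Z * Zᴴ * C⁻¹ * Z = Zᴴ * Z := by
      have h1 : Zᴴ * C⁻¹ * Z - Zᴴ * Z * Zᴴ * C⁻¹ * Z = Zᴴ * ((1 - Z * Zᴴ) * C⁻¹) * Z := by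
        noncomm_ring
      rw [h1, ← hCdef, hCC, Matrix.mul_one]
    rw [expand, hmid]
    abel
  have hval : Matrix.trace (C⁻¹ * (A * Zᴴ) * C⁻¹ * (Z * Bᴴ) + C⁻¹ * (A * Bᴴ))
      = Matrix.trace (C⁻¹ * A * (1 - Zᴴ * Z)⁻¹ * Bᴴ) := by
    rw [hQ]
    congr 1
    noncomm_ring
  rw [hval] at hφ'
  exact hφ'.congr_of_eventuallyEq hφeq
end

section
/- Let x₊, x₋ : ℝ → ℝ be twice differentiable solutions of ẍ(t) + t²x(t) = 0 with x₊ even, x₋ odd, and Wronskian x₊ẋ₋ − ẋ₊x₋ = 1. For t > 0 and i ∈ {1,2} with frequencies ω₁ = t₁ > 0, ω₂ = t₂ > 0, define a_{i±}(t) = (ω_i·x_±(t) + i·ẋ_±(t))/√(2ω_i), and set U(t₁,t₂) = i·a_{2+}(t₂)·conj(a_{1−}(t₁)) − i·a_{2−}(t₂)·conj(a_{1+}(t₁)) and V̄(t₁,t₂) = −i·a_{2+}(t₂)·a_{1−}(t₁) + i·a_{2−}(t₂)·a_{1+}(t₁). Then, in the double limit t₁, t₂ → +∞ (i.e. as min(t₁,t₂)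 → ∞): U(t₁,t₂)·e^{−i(t₁² − t₂²)/2} → 1 and V̄(t₁,t₂) → 0. -/
open Real Filter

/-- Instantaneous complex coordinate `a(t) = (ω·x(t) + i·ẋ(t))/√(2ω)` at frequency `ω = t`. -/
noncomputable def aInst (f g : ℝ → ℝ) (t : ℝ) : ℂ :=
  ((t * f t : ℝ) + Complex.I * (g t : ℝ)) / ((Real.sqrt (2 * t) : ℝ) : ℂ)

noncomputable def bAux (x v : ℝ → ℝ) (t : ℝ) : ℂ :=
  aInst x v t * Complex.exp (Complex.I * (t:ℂ)^2 / 2)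

set_option maxHeartbeats 1000000 in
lemma bAux_hasDerivAt (x v : ℝ → ℝ)
    (hx : ∀ t, HasDerivAt x (v t) t) (hv : ∀ t, HasDerivAt v (-(t ^ 2 * x t)) t)
    {t : ℝ} (ht : 0 < t) :
    HasDerivAt (bAux x v)
      ((starRingEnd ℂ) (bAux x v t) * Complex.exp (Complex.I * (t:ℂ)^2) / (2*t)) t := by
  have h2t : (0:ℝ) < 2 * t := by linarith
  have hs0 : Real.sqrt (2*t) ≠ 0 := by positivity
  have hsC : ((Real.sqrt (2*t) : ℝ) : ℂ) ≠ 0 := by exact_mod_cast hs0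
  have hN : HasDerivAt (fun u : ℝ => (((u * x u : ℝ) : ℂ) + Complex.I * ((v u : ℝ) : ℂ)))
      (((x t + t * v t : ℝ) : ℂ) + Complex.I * ((-(t ^ 2 * x t) : ℝ) : ℂ)) t := by
    have h1 : HasDerivAt (fun u : ℝ => ((u * x u : ℝ) : ℂ)) ((x t + t * v t : ℝ) : ℂ) t := by
      have h := ((hasDerivAt_id t).mul (hx t))
      simp only [id_eq] at h
      have h' : HasDerivAt (fun u : ℝ => u * x u) (x t + t * v t) t := by
        exact h.congr_deriv (by ring)
      exact h'.ofReal_comp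
    exact h1.add ((hv t).ofReal_comp.const_mul Complex.I)
  have hu : HasDerivAt (fun u : ℝ => ((u:ℝ):ℂ)) 1 t := by
    simpa using (hasDerivAt_id t).ofReal_comp
  have hz : HasDerivAt (fun u : ℝ => Complex.I * (u:ℂ)^2 / 2) (Complex.I * (t:ℂ)) t := by
    have h := ((hu.mul hu).const_mul Complex.I).div_const 2
    have h' : HasDerivAt (fun u : ℝ => Complex.I * ((u:ℂ) * (u:ℂ)) / 2)
        (Complex.I * (t:ℂ)) t := by exact h.congr_deriv (by ring)
    simpa only [← pow_two] using h'
  have hE : HasDerivAt (fun u : ℝ => Complex.exp (Complex.I * (u:ℂ)^2 / 2))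
      (Complex.exp (Complex.I * (t:ℂ)^2 / 2) * (Complex.I * (t:ℂ))) t := hz.cexp
  have hS : HasDerivAt (fun u : ℝ => ((Real.sqrt (2*u) : ℝ) : ℂ)) (((Real.sqrt (2*t))⁻¹ : ℝ) : ℂ) t := by
    have hi : HasDerivAt (fun u : ℝ => 2*u) 2 t := by
      simpa using (hasDerivAt_id t).const_mul 2
    have h1 := (Real.hasDerivAt_sqrt (by positivity : (2*t:ℝ) ≠ 0)).comp t hi
    have h1' : HasDerivAt (fun u : ℝ => Real.sqrt (2*u)) ((Real.sqrt (2*t))⁻¹) t := by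
      refine h1.congr_deriv ?_
      field_simp
    exact h1'.ofReal_comp
  have hfun : bAux x v = (fun y : ℝ => (((y * x y:ℝ):ℂ) + Complex.I * ((v y:ℝ):ℂ))
      * Complex.exp (Complex.I * (y:ℂ)^2 / 2) / ((Real.sqrt (2*y):ℝ):ℂ)) := by
    funext y; simp [bAux, aInst, div_mul_eq_mul_div]
  rw [hfun]
  have hb := (hN.mul hE).div hS hsC
  refine hb.congr_deriv ?_
  symm
  rw [← hfun]
  simp only [Pi.mul_apply]
  simp only [bAux, aInst, map_div₀, map_add, map_mul, Complex.conj_I, Complex.conj_ofReal,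
    ← Complex.exp_conj, map_pow, map_ofNat]
  have hsq : ((t:ℝ):ℂ) = ((Real.sqrt (2*t) : ℝ) : ℂ)^2 / 2 := by
    rw [← Complex.ofReal_pow, Real.sq_sqrt h2t.le]; push_cast; ring
  have hEinv : Complex.exp (-Complex.I * (t:ℂ)^2 / 2)
      = (Complex.exp (Complex.I * (t:ℂ)^2 / 2))⁻¹ := by
    rw [← Complex.exp_neg]
    congr 1
    ring
  have hEsq : Complex.exp (Complex.I * (t:ℂ)^2)
      = Complex.exp (Complex.I * (t:ℂ)^2 / 2) * Complex.exp (Complex.I * (t:ℂ)^2 / 2) := by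
    rw [← Complex.exp_add]; ring_nf
  rw [hEinv, hEsq]
  simp only [Complex.ofReal_mul, Complex.ofReal_add, Complex.ofReal_neg, Complex.ofReal_pow,
    Complex.ofReal_inv]
  rw [hsq]
  set s : ℂ := ((Real.sqrt (2*t) : ℝ) : ℂ) with hs_def
  have hs : s ≠ 0 := hsC
  have hexp0 : Complex.exp (Complex.I * (s^2/2)^2 / 2) ≠ 0 := Complex.exp_ne_zero _
  field_simp
  ring_nf
  simp only [Complex.I_sq]
  ring

lemma eAux_le (x v : ℝ → ℝ)
    (hx : ∀ t, HasDerivAt x (v t) t) (hv : ∀ t, HasDerivAt v (-(t ^ 2 * x t)) t)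
    {t : ℝ} (ht : 1 ≤ t) :
    t^2*(x t)^2 + (v t)^2 ≤ ((x 1)^2 + (v 1)^2) * t^2 := by
  have hxc : Continuous x := continuous_iff_continuousAt.2 fun u => (hx u).continuousAt
  have hvc : Continuous v := continuous_iff_continuousAt.2 fun u => (hv u).continuousAt
  have hf : ∀ u : ℝ, HasDerivAt (fun u : ℝ => u^2*(x u)^2 + (v u)^2) (2*u*(x u)^2) u := by
    intro u
    have h1 := (hasDerivAt_pow 2 u).mul ((hx u).pow 2)
    have h2 := (hv u).pow 2
    have := h1.add h2
    refine this.congr_deriv ?_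
    simp only [Pi.pow_apply]
    ring
  have key : AntitoneOn (fun u : ℝ => (u^2*(x u)^2 + (v u)^2)/u^2) (Set.Ici 1) := by
    apply antitoneOn_of_deriv_nonpos (convex_Ici 1)
    · apply ContinuousOn.div
      · exact (((continuous_pow 2).mul (hxc.pow 2)).add (hvc.pow 2)).continuousOn
      · exact (continuous_pow 2).continuousOn
      · intro u hu
        have : (1:ℝ) ≤ u := hu
        positivity
    · intro u hu
      rw [interior_Ici] at hu
      have hu1 : (1:ℝ) < u := hu
      have hu0 : (0:ℝ) < u := by linarith
      exact (((hf u).div (hasDerivAt_pow 2 u)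
        (by positivity : (u:ℝ)^2 ≠ 0)).differentiableAt).differentiableWithinAt
    · intro u hu
      rw [interior_Ici] at hu
      have hu1 : (1:ℝ) < u := hu
      have hu0 : (0:ℝ) < u := by linarith
      have hd := (hf u).div (hasDerivAt_pow 2 u) (by positivity : (u:ℝ)^2 ≠ 0)
      have hd' : HasDerivAt (fun u : ℝ => (u^2*(x u)^2 + (v u)^2)/u^2) _ u := hd
      rw [hd'.deriv]
      have hnum : 2 * u * x u ^ 2 * u ^ 2 - (u ^ 2 * x u ^ 2 + v u ^ 2) * (((2:ℕ):ℝ) * u ^ (2 - 1))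
          = -(2*u*(v u)^2) := by norm_num; ring
      rw [hnum]
      apply div_nonpos_of_nonpos_of_nonneg
      · nlinarith [sq_nonneg (v u)]
      · positivity
  have h1 : (1:ℝ) ∈ Set.Ici (1:ℝ) := Set.mem_Ici.2 le_rfl
  have h2 : t ∈ Set.Ici (1:ℝ) := Set.mem_Ici.2 ht
  have := key h1 h2 ht
  simp only [one_pow] at this
  have ht0 : (0:ℝ) < t := by linarith
  calc t^2*(x t)^2 + (v t)^2 = ((t^2*(x t)^2 + (v t)^2)/t^2) * t^2 := by field_simp
    _ ≤ ((1*(x 1)^2 + (v 1)^2)/1) * t^2 := by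
        apply mul_le_mul_of_nonneg_right _ (by positivity)
        exact this
    _ = ((x 1)^2 + (v 1)^2) * t^2 := by ring

lemma bAux_norm_le (x v : ℝ → ℝ)
    (hx : ∀ t, HasDerivAt x (v t) t) (hv : ∀ t, HasDerivAt v (-(t ^ 2 * x t)) t)
    {t : ℝ} (ht : 1 ≤ t) :
    ‖bAux x v t‖ ≤ Real.sqrt ((x 1)^2 + (v 1)^2) * Real.sqrt t := by
  have ht0 : (0:ℝ) < t := by linarith
  have h2t : (0:ℝ) < 2*t := by linarith
  have habs : ‖bAux x v t‖ = Real.sqrt ((t*x t)^2 + (v t)^2) / Real.sqrt (2*t) := by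
    rw [bAux, norm_mul, aInst, norm_div]
    have he : ‖Complex.exp (Complex.I * (t:ℂ)^2 / 2)‖ = 1 := by
      rw [Complex.norm_exp]
      simp [← Complex.ofReal_pow]
    rw [he, mul_one]
    congr 1
    · rw [Complex.norm_def]
      rw [show ((t * x t : ℝ) : ℂ) + Complex.I * ((v t : ℝ):ℂ)
          = ((t * x t : ℝ) : ℂ) + ((v t : ℝ):ℂ) * Complex.I by ring]
      rw [Complex.normSq_add_mul_I]
    · rw [Complex.norm_real, Real.norm_eq_abs]
      exact _root_.abs_of_nonneg (Real.sqrt_nonneg _)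
  rw [habs, div_le_iff₀ (by positivity)]
  rw [← Real.sqrt_mul (by positivity), ← Real.sqrt_mul (by positivity)]
  apply Real.sqrt_le_sqrt
  have hE := eAux_le x v hx hv ht
  have h1 : (t * x t)^2 = t^2 * (x t)^2 := by ring
  rw [h1]
  nlinarith [sq_nonneg (v t), sq_nonneg (x 1), sq_nonneg (v 1), ht0]

noncomputable def cAux (x v : ℝ → ℝ) (t : ℝ) : ℂ :=
  bAux x v t - (starRingEnd ℂ) (bAux x v t) * Complex.exp (Complex.I * (t:ℂ)^2)
    / (4*Complex.I*(t:ℂ)^2)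

set_option maxHeartbeats 1000000 in
lemma cAux_hasDerivAt (x v : ℝ → ℝ)
    (hx : ∀ t, HasDerivAt x (v t) t) (hv : ∀ t, HasDerivAt v (-(t ^ 2 * x t)) t)
    {t : ℝ} (ht : 0 < t) :
    HasDerivAt (cAux x v)
      ((-(bAux x v t) + 4 * (starRingEnd ℂ) (bAux x v t) * Complex.exp (Complex.I*(t:ℂ)^2))
        / (8*Complex.I*(t:ℂ)^3)) t := by
  have htC : ((t:ℝ):ℂ) ≠ 0 := by exact_mod_cast ht.ne'
  have hb := bAux_hasDerivAt x v hx hv ht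
  have hcb : HasDerivAt (fun u => (starRingEnd ℂ) (bAux x v u))
      ((starRingEnd ℂ) ((starRingEnd ℂ) (bAux x v t) * Complex.exp (Complex.I * (t:ℂ)^2) / (2*t))) t := by
    simpa only [starRingEnd_apply] using hb.star
  have hu : HasDerivAt (fun u : ℝ => ((u:ℝ):ℂ)) 1 t := by
    simpa using (hasDerivAt_id t).ofReal_comp
  have hz2 : HasDerivAt (fun u : ℝ => Complex.I * (u:ℂ)^2) (2 * Complex.I * (t:ℂ)) t := by
    have h := (hu.mul hu).const_mul Complex.I
    have h' : HasDerivAt (fun u : ℝ => Complex.I * ((u:ℂ) * (u:ℂ))) (2 * Complex.I * (t:ℂ)) t := by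
      exact h.congr_deriv (by ring)
    simpa only [← pow_two] using h'
  have hE2 : HasDerivAt (fun u : ℝ => Complex.exp (Complex.I * (u:ℂ)^2))
      (Complex.exp (Complex.I * (t:ℂ)^2) * (2 * Complex.I * (t:ℂ))) t := hz2.cexp
  have hden : HasDerivAt (fun u : ℝ => 4*Complex.I*(u:ℂ)^2) (8 * Complex.I * (t:ℂ)) t := by
    have h := (hu.mul hu).const_mul (4*Complex.I)
    have h' : HasDerivAt (fun u : ℝ => (4*Complex.I) * ((u:ℂ) * (u:ℂ))) (8 * Complex.I * (t:ℂ)) t := by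
      exact h.congr_deriv (by ring)
    simpa only [← pow_two, mul_assoc] using h'
  have hden0 : 4*Complex.I*(t:ℂ)^2 ≠ 0 := by
    simp [Complex.I_ne_zero, htC]
  have hq := (hcb.mul hE2).div hden hden0
  have hc := hb.sub hq
  refine hc.congr_deriv ?_
  symm
  simp only [Pi.mul_apply]
  simp only [map_div₀, map_mul, map_add, Complex.conj_conj, Complex.conj_I, Complex.conj_ofReal,
    ← Complex.exp_conj, map_pow, map_ofNat]
  have hEinv : Complex.exp (-Complex.I * (t:ℂ)^2) = (Complex.exp (Complex.I * (t:ℂ)^2))⁻¹ := by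
    rw [← Complex.exp_neg]; congr 1; ring
  rw [hEinv]
  have hexp0 := Complex.exp_ne_zero (Complex.I * (t:ℂ)^2)
  field_simp [Complex.I_ne_zero, htC, hexp0]
  ring_nf

lemma norm_exp_I_sq (t : ℝ) : ‖Complex.exp (Complex.I * (t:ℂ)^2)‖ = 1 := by
  rw [Complex.norm_exp]
  simp [← Complex.ofReal_pow]

set_option maxHeartbeats 1000000 in
lemma bAux_tendsto (x v : ℝ → ℝ)
    (hx : ∀ t, HasDerivAt x (v t) t) (hv : ∀ t, HasDerivAt v (-(t ^ 2 * x t)) t) :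
    ∃ L : ℂ, Tendsto (bAux x v) atTop (nhds L) := by
  set K : ℝ := Real.sqrt ((x 1)^2 + (v 1)^2) with hK
  have hK0 : 0 ≤ K := Real.sqrt_nonneg _
  have hbnd : ∀ t : ℝ, 1 ≤ t → ‖bAux x v t‖ ≤ K * Real.sqrt t :=
    fun t ht => bAux_norm_le x v hx hv ht
  set φ : ℝ → ℂ := fun t =>
    (-(bAux x v t) + 4 * (starRingEnd ℂ) (bAux x v t) * Complex.exp (Complex.I*(t:ℂ)^2))
      / (8*Complex.I*(t:ℂ)^3) with hφ
  -- continuity of bAux on positive reals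
  have hbct : ∀ t : ℝ, 0 < t → ContinuousAt (bAux x v) t :=
    fun t ht => (bAux_hasDerivAt x v hx hv ht).continuousAt
  have hφcont : ContinuousOn φ (Set.Ici 1) := by
    intro t ht
    have ht1 : (1:ℝ) ≤ t := ht
    have ht0 : (0:ℝ) < t := by linarith
    apply ContinuousAt.continuousWithinAt
    apply ContinuousAt.div
    · exact ((hbct t ht0).neg).add ((continuousAt_const.mul ((continuous_star.continuousAt).comp
        (hbct t ht0))).mul ((Complex.continuous_exp.comp (by fun_prop)).continuousAt))
    · fun_prop
    · have htC : ((t:ℝ):ℂ) ≠ 0 := by exact_mod_cast ht0.ne'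
      simp [Complex.I_ne_zero, htC]
  have hφbnd : ∀ t : ℝ, 1 ≤ t → ‖φ t‖ ≤ K * t ^ (-(5/2) : ℝ) := by
    intro t ht1
    have ht0 : (0:ℝ) < t := by linarith
    have hnum : ‖(-(bAux x v t) + 4 * (starRingEnd ℂ) (bAux x v t)
        * Complex.exp (Complex.I*(t:ℂ)^2))‖ ≤ 5 * (K * Real.sqrt t) := by
      calc ‖(-(bAux x v t) + 4 * (starRingEnd ℂ) (bAux x v t) * Complex.exp (Complex.I*(t:ℂ)^2))‖
          ≤ ‖-(bAux x v t)‖ + ‖4 * (starRingEnd ℂ) (bAux x v t) * Complex.exp (Complex.I*(t:ℂ)^2)‖ :=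
            norm_add_le _ _
        _ = ‖bAux x v t‖ + 4 * ‖bAux x v t‖ := by
            rw [norm_neg, norm_mul, norm_mul, norm_exp_I_sq, RCLike.norm_conj]
            norm_num
        _ = 5 * ‖bAux x v t‖ := by ring
        _ ≤ 5 * (K * Real.sqrt t) := by
            have := hbnd t ht1
            linarith
    have hden : ‖(8*Complex.I*(t:ℂ)^3 : ℂ)‖ = 8 * t^3 := by
      rw [norm_mul, norm_mul, Complex.norm_I, norm_pow, Complex.norm_real]
      simp [abs_of_pos ht0]
    rw [hφ]
    simp only [norm_div]
    rw [hden, div_le_iff₀ (by positivity)]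
    calc ‖(-(bAux x v t) + 4 * (starRingEnd ℂ) (bAux x v t) * Complex.exp (Complex.I*(t:ℂ)^2))‖
        ≤ 5 * (K * Real.sqrt t) := hnum
      _ ≤ 8 * (K * Real.sqrt t) := by nlinarith [Real.sqrt_nonneg t]
      _ = K * t ^ (-(5/2) : ℝ) * (8 * t^3) := by
          have h3 : (t:ℝ)^3 = t ^ ((3:ℕ):ℝ) := (Real.rpow_natCast t 3).symm
          have hcomb : t ^ (-(5/2) : ℝ) * t ^ ((3:ℕ):ℝ) = t ^ ((1:ℝ)/2) := by
            rw [← Real.rpow_add ht0]; norm_num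
          rw [Real.sqrt_eq_rpow, h3]
          calc 8 * (K * t ^ ((1:ℝ)/2)) = K * (t ^ (-(5/2):ℝ) * t ^ ((3:ℕ):ℝ)) * 8 := by
                rw [hcomb]; ring
            _ = K * t ^ (-(5/2):ℝ) * (8 * t ^ ((3:ℕ):ℝ)) := by ring
  -- integrability of φ on Ioi 1
  have hrpow : MeasureTheory.IntegrableOn (fun t : ℝ => t ^ (-(5/2) : ℝ)) (Set.Ioi 1) :=
    integrableOn_Ioi_rpow_of_lt (by norm_num) one_pos
  have hφint : MeasureTheory.IntegrableOn φ (Set.Ioi 1) := by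
    apply MeasureTheory.Integrable.mono' (hrpow.const_mul K)
    · exact (hφcont.mono (Set.Ioi_subset_Ici le_rfl)).aestronglyMeasurable measurableSet_Ioi
    · refine (MeasureTheory.ae_restrict_iff' measurableSet_Ioi).2 (Filter.Eventually.of_forall ?_)
      intro t ht
      exact hφbnd t (le_of_lt ht)
  -- FTC
  have hftc : ∀ t : ℝ, 1 ≤ t → cAux x v t = cAux x v 1 + ∫ u in (1:ℝ)..t, φ u := by
    intro t ht
    have : ∫ u in (1:ℝ)..t, φ u = cAux x v t - cAux x v 1 := by
      apply intervalIntegral.integral_eq_sub_of_hasDerivAt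
      · intro u hu
        rw [Set.uIcc_of_le ht] at hu
        have hu0 : (0:ℝ) < u := by have := hu.1; linarith
        exact cAux_hasDerivAt x v hx hv hu0
      · exact (intervalIntegrable_iff_integrableOn_Ioc_of_le ht).2
          (hφint.mono_set Set.Ioc_subset_Ioi_self)
    rw [this]; ring
  have hInt_tend : Tendsto (fun t : ℝ => ∫ u in (1:ℝ)..t, φ u) atTop
      (nhds (∫ u in Set.Ioi (1:ℝ), φ u)) :=
    MeasureTheory.intervalIntegral_tendsto_integral_Ioi 1 hφint tendsto_id
  have hc_tend : Tendsto (cAux x v) atTop (nhds (cAux x v 1 + ∫ u in Set.Ioi (1:ℝ), φ u)) := by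
    apply Tendsto.congr' _ (tendsto_const_nhds.add hInt_tend)
    filter_upwards [eventually_ge_atTop (1:ℝ)] with t ht
    exact (hftc t ht).symm
  -- remainder term
  set r : ℝ → ℂ := fun t =>
    (starRingEnd ℂ) (bAux x v t) * Complex.exp (Complex.I * (t:ℂ)^2) / (4*Complex.I*(t:ℂ)^2) with hr
  have hr_tend : Tendsto r atTop (nhds 0) := by
    have hg : Tendsto (fun k : ℝ => K * k ^ (-(3/2):ℝ)) atTop (nhds 0) := by
      simpa using (tendsto_rpow_neg_atTop (by norm_num : (0:ℝ) < 3/2)).const_mul K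
    apply squeeze_zero_norm' _ hg
    filter_upwards [eventually_ge_atTop (1:ℝ)] with t ht
    have ht0 : (0:ℝ) < t := by linarith
    have hden : ‖(4*Complex.I*(t:ℂ)^2 : ℂ)‖ = 4 * t^2 := by
      rw [norm_mul, norm_mul, Complex.norm_I, norm_pow, Complex.norm_real]
      simp [abs_of_pos ht0]
    have hnr : ‖r t‖ = ‖bAux x v t‖ / (4 * t^2) := by
      simp only [hr]
      rw [norm_div, hden, norm_mul, RCLike.norm_conj, norm_exp_I_sq, mul_one]
    rw [hnr, div_le_iff₀ (by positivity)]
    calc ‖bAux x v t‖ ≤ K * Real.sqrt t := hbnd t ht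
      _ ≤ K * t ^ (-(3/2):ℝ) * (4 * t^2) := by
          have h2 : (t:ℝ)^2 = t ^ ((2:ℕ):ℝ) := (Real.rpow_natCast t 2).symm
          have hcomb : t ^ (-(3/2) : ℝ) * t ^ ((2:ℕ):ℝ) = t ^ ((1:ℝ)/2) := by
            rw [← Real.rpow_add ht0]; norm_num
          rw [Real.sqrt_eq_rpow, h2]
          calc K * t ^ ((1:ℝ)/2) = K * (t ^ (-(3/2):ℝ) * t ^ ((2:ℕ):ℝ)) := by rw [hcomb]
            _ ≤ K * t ^ (-(3/2):ℝ) * (4 * t ^ ((2:ℕ):ℝ)) := by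
                have hX : 0 ≤ K * (t ^ (-(3/2):ℝ) * t ^ ((2:ℕ):ℝ)) := by positivity
                nlinarith [hX]
  refine ⟨cAux x v 1 + ∫ u in Set.Ioi (1:ℝ), φ u, ?_⟩
  have : bAux x v = fun t => cAux x v t + r t := by
    funext t
    rw [cAux, hr]
    ring
  rw [this]
  simpa using hc_tend.add hr_tend

lemma conj_exp_half (u : ℝ) : (starRingEnd ℂ) (Complex.exp (Complex.I*(u:ℂ)^2/2))
    = Complex.exp (-(Complex.I*(u:ℂ)^2/2)) := by
  rw [← Complex.exp_conj]
  congr 1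
  simp only [map_div₀, map_mul, Complex.conj_I, map_pow, Complex.conj_ofReal, map_ofNat]
  ring

set_option maxHeartbeats 1000000 in
lemma bracket_eq_one (xp vp xm vm : ℝ → ℝ)
    (hW : ∀ t, xp t * vm t - vp t * xm t = 1) {t : ℝ} (ht : 0 < t) :
    Complex.I * bAux xp vp t * (starRingEnd ℂ) (bAux xm vm t)
      - Complex.I * bAux xm vm t * (starRingEnd ℂ) (bAux xp vp t) = 1 := by
  have h2t : (0:ℝ) < 2*t := by linarith
  have hs0 : Real.sqrt (2*t) ≠ 0 := by positivity
  have hsC : ((Real.sqrt (2*t) : ℝ) : ℂ) ≠ 0 := by exact_mod_cast hs0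
  have hWC : ((xp t : ℝ):ℂ) * ((vm t : ℝ):ℂ) - ((vp t : ℝ):ℂ) * ((xm t : ℝ):ℂ) = 1 := by
    exact_mod_cast congrArg (Complex.ofReal) (hW t)
  have hsq : ((t:ℝ):ℂ) = ((Real.sqrt (2*t) : ℝ) : ℂ)^2 / 2 := by
    rw [← Complex.ofReal_pow, Real.sq_sqrt h2t.le]; push_cast; ring
  simp only [bAux, aInst, map_mul, map_div₀, map_add, Complex.conj_I, Complex.conj_ofReal,
    conj_exp_half]
  simp only [Complex.ofReal_mul]
  rw [hsq]
  set s : ℂ := ((Real.sqrt (2*t) : ℝ) : ℂ) with hs_def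
  set E : ℂ := Complex.exp (Complex.I * (s^2/2)^2 / 2) with hE_def
  set F : ℂ := Complex.exp (-(Complex.I * (s^2/2)^2 / 2)) with hF_def
  have hEF : E * F = 1 := by rw [hE_def, hF_def, ← Complex.exp_add]; simp
  field_simp
  linear_combination (-4*s^2*E*F*(((xp t:ℝ):ℂ)*((vm t:ℝ):ℂ) - ((vp t:ℝ):ℂ)*((xm t:ℝ):ℂ))) * Complex.I_sq
    + (4*s^2*E*F) * hWC + (4*s^2) * hEF

lemma norm_exp_sum_sq (a b : ℝ) :
    ‖Complex.exp (-Complex.I*((a:ℂ)^2+(b:ℂ)^2)/2)‖ = 1 := by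
  rw [Complex.norm_exp]
  simp [← Complex.ofReal_pow]

lemma aInst_eq_bAux (f g : ℝ → ℝ) (u : ℝ) :
    aInst f g u = bAux f g u * Complex.exp (-(Complex.I*(u:ℂ)^2/2)) := by
  rw [bAux, mul_assoc, ← Complex.exp_add]
  simp

/-- Asymptotic diagonal form of the Weber propagator from `t₁` to `t₂`
(frequencies `ω₁ = t₁`, `ω₂ = t₂`): `U·e^{−i(t₁²−t₂²)/2} → 1`, `V̄ → 0` as
`t₁, t₂ → +∞` jointly. -/
theorem weber_propagator_two_times
    (xp vp xm vm : ℝ → ℝ)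
    (hxp : ∀ t, HasDerivAt xp (vp t) t) (hvp : ∀ t, HasDerivAt vp (-(t ^ 2 * xp t)) t)
    (hxm : ∀ t, HasDerivAt xm (vm t) t) (hvm : ∀ t, HasDerivAt vm (-(t ^ 2 * xm t)) t)
    (heven : ∀ t, xp (-t) = xp t) (hodd : ∀ t, xm (-t) = -xm t)
    (hW : ∀ t, xp t * vm t - vp t * xm t = 1)
    (U Vb : ℝ → ℝ → ℂ)
    (hU : ∀ t₁ t₂, U t₁ t₂ =
      Complex.I * aInst xp vp t₂ * (starRingEnd ℂ) (aInst xm vm t₁)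
        - Complex.I * aInst xm vm t₂ * (starRingEnd ℂ) (aInst xp vp t₁))
    (hV : ∀ t₁ t₂, Vb t₁ t₂ =
      -Complex.I * aInst xp vp t₂ * aInst xm vm t₁
        + Complex.I * aInst xm vm t₂ * aInst xp vp t₁) :
    Tendsto (fun p : ℝ × ℝ =>
        U p.1 p.2 * Complex.exp (-Complex.I * ((p.1 : ℂ) ^ 2 - (p.2 : ℂ) ^ 2) / 2))
      (atTop ×ˢ atTop) (nhds 1) ∧
    Tendsto (fun p : ℝ × ℝ => Vb p.1 p.2) (atTop ×ˢ atTop) (nhds 0) := by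
  obtain ⟨Lp, hLp⟩ := bAux_tendsto xp vp hxp hvp
  obtain ⟨Lm, hLm⟩ := bAux_tendsto xm vm hxm hvm
  have hLmc : Tendsto (fun t => (starRingEnd ℂ) (bAux xm vm t)) atTop
      (nhds ((starRingEnd ℂ) Lm)) := (Complex.continuous_conj.tendsto Lm).comp hLm
  have hLpc : Tendsto (fun t => (starRingEnd ℂ) (bAux xp vp t)) atTop
      (nhds ((starRingEnd ℂ) Lp)) := (Complex.continuous_conj.tendsto Lp).comp hLp
  set S : ℂ := Complex.I * Lp * (starRingEnd ℂ) Lm - Complex.I * Lm * (starRingEnd ℂ) Lp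
    with hS_def
  have hS : Tendsto (fun t => Complex.I * bAux xp vp t * (starRingEnd ℂ) (bAux xm vm t)
      - Complex.I * bAux xm vm t * (starRingEnd ℂ) (bAux xp vp t)) atTop (nhds S) :=
    ((tendsto_const_nhds.mul hLp).mul hLmc).sub ((tendsto_const_nhds.mul hLm).mul hLpc)
  have hone : Tendsto (fun t => Complex.I * bAux xp vp t * (starRingEnd ℂ) (bAux xm vm t)
      - Complex.I * bAux xm vm t * (starRingEnd ℂ) (bAux xp vp t)) atTop (nhds 1) := by
    apply Tendsto.congr' _ (tendsto_const_nhds : Tendsto (fun _ : ℝ => (1:ℂ)) atTop (nhds 1))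
    filter_upwards [eventually_gt_atTop (0:ℝ)] with t ht
    exact (bracket_eq_one xp vp xm vm hW ht).symm
  have hS1 : S = 1 := tendsto_nhds_unique hS hone
  constructor
  · have hUeq : ∀ p : ℝ × ℝ, U p.1 p.2 * Complex.exp (-Complex.I * ((p.1:ℂ)^2 - (p.2:ℂ)^2) / 2)
        = Complex.I * bAux xp vp p.2 * (starRingEnd ℂ) (bAux xm vm p.1)
          - Complex.I * bAux xm vm p.2 * (starRingEnd ℂ) (bAux xp vp p.1) := by
      intro p
      rw [hU p.1 p.2]
      simp only [bAux, map_mul, conj_exp_half]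
      have hE : Complex.exp (Complex.I*(p.2:ℂ)^2/2) * Complex.exp (-(Complex.I*(p.1:ℂ)^2/2))
          = Complex.exp (-Complex.I*((p.1:ℂ)^2-(p.2:ℂ)^2)/2) := by
        rw [← Complex.exp_add]; ring_nf
      linear_combination (-(Complex.I * aInst xp vp p.2 * (starRingEnd ℂ) (aInst xm vm p.1)
        - Complex.I * aInst xm vm p.2 * (starRingEnd ℂ) (aInst xp vp p.1))) * hE
    have hF : Tendsto (fun p : ℝ × ℝ =>
        Complex.I * bAux xp vp p.2 * (starRingEnd ℂ) (bAux xm vm p.1)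
          - Complex.I * bAux xm vm p.2 * (starRingEnd ℂ) (bAux xp vp p.1))
        (atTop ×ˢ atTop) (nhds S) :=
      ((tendsto_const_nhds.mul (hLp.comp tendsto_snd)).mul (hLmc.comp tendsto_fst)).sub
        ((tendsto_const_nhds.mul (hLm.comp tendsto_snd)).mul (hLpc.comp tendsto_fst))
    have := Tendsto.congr (fun p => (hUeq p).symm) hF
    rwa [hS1] at this
  · have hVeq : ∀ p : ℝ × ℝ, Vb p.1 p.2
        = Complex.exp (-Complex.I*((p.1:ℂ)^2+(p.2:ℂ)^2)/2)
          * (-Complex.I * bAux xp vp p.2 * bAux xm vm p.1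
            + Complex.I * bAux xm vm p.2 * bAux xp vp p.1) := by
      intro p
      rw [hV p.1 p.2, aInst_eq_bAux xp vp p.2, aInst_eq_bAux xm vm p.1,
        aInst_eq_bAux xm vm p.2, aInst_eq_bAux xp vp p.1]
      have hE2 : Complex.exp (-(Complex.I*(p.2:ℂ)^2/2)) * Complex.exp (-(Complex.I*(p.1:ℂ)^2/2))
          = Complex.exp (-Complex.I*((p.1:ℂ)^2+(p.2:ℂ)^2)/2) := by
        rw [← Complex.exp_add]; ring_nf
      linear_combination (-Complex.I * bAux xp vp p.2 * bAux xm vm p.1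
        + Complex.I * bAux xm vm p.2 * bAux xp vp p.1) * hE2
    have hG : Tendsto (fun p : ℝ × ℝ =>
        -Complex.I * bAux xp vp p.2 * bAux xm vm p.1
          + Complex.I * bAux xm vm p.2 * bAux xp vp p.1) (atTop ×ˢ atTop) (nhds 0) := by
      have h0 : -Complex.I * Lp * Lm + Complex.I * Lm * Lp = 0 := by ring
      have hG' : Tendsto (fun p : ℝ × ℝ =>
          -Complex.I * bAux xp vp p.2 * bAux xm vm p.1
            + Complex.I * bAux xm vm p.2 * bAux xp vp p.1) (atTop ×ˢ atTop)
          (nhds (-Complex.I * Lp * Lm + Complex.I * Lm * Lp)) :=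
        ((tendsto_const_nhds.mul (hLp.comp tendsto_snd)).mul (hLm.comp tendsto_fst)).add
          ((tendsto_const_nhds.mul (hLm.comp tendsto_snd)).mul (hLp.comp tendsto_fst))
      rwa [h0] at hG'
    rw [tendsto_zero_iff_norm_tendsto_zero]
    have hGn : Tendsto (fun p : ℝ × ℝ => ‖-Complex.I * bAux xp vp p.2 * bAux xm vm p.1
        + Complex.I * bAux xm vm p.2 * bAux xp vp p.1‖) (atTop ×ˢ atTop) (nhds 0) := by
      simpa using hG.norm
    apply Tendsto.congr _ hGn
    intro p
    rw [hVeq p, norm_mul, norm_exp_sum_sq, one_mul]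
end
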